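/- Let t, h, x, y, z be real numbers, all nonzero, with x, y, z ≠ ±h, satisfying sqrt(t·(1/h² - 1/x²)·(1/h² - 1/y²)·(1/h² - 1/z²)) = (1/h + 1/x)·(1/h + 1/y)·(1/h + 1/z). Then there exists a nonzero real m such that, setting γ = m·t·(z-h) - m·(z+h) and β = h·m·t·(z-h) + h·m·(z+h) - h², we have x + y = γ, x·y = β, γ² - 4β ≥ 0, and (h² + h·γ + β)·β·(1/h + 1/z) > 0. -/

import Mathlib

theorem stmt_14 (t h x y z : ℝ) (ht : t ≠ 0) (hh : h ≠ 0) (hx : x ≠ 0) (hy : y ≠ 0)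
    (hz : z ≠ 0) (hx1 : x ≠ h) (hx2 : x ≠ -h) (hy1 : y ≠ h) (hy2 : y ≠ -h)
    (hz1 : z ≠ h) (hz2 : z ≠ -h)
    (heq : Real.sqrt (t * (1/h^2 - 1/x^2) * (1/h^2 - 1/y^2) * (1/h^2 - 1/z^2)) =
      (1/h + 1/x) * (1/h + 1/y) * (1/h + 1/z)) :
    ∃ m : ℝ, m ≠ 0 ∧
      x + y = m * t * (z - h) - m * (z + h) ∧
      x * y = h * m * t * (z - h) + h * m * (z + h) - h^2 ∧
      (m * t * (z - h) - m * (z + h))^2 -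
        4 * (h * m * t * (z - h) + h * m * (z + h) - h^2) ≥ 0 ∧
      (h^2 + h * (m * t * (z - h) - m * (z + h)) +
          (h * m * t * (z - h) + h * m * (z + h) - h^2)) *
        (h * m * t * (z - h) + h * m * (z + h) - h^2) * (1/h + 1/z) > 0 := by
  have hxp : x + h ≠ 0 := fun H => hx2 (by linarith [H])
  have hxm : x - h ≠ 0 := sub_ne_zero.mpr hx1
  have hyp : y + h ≠ 0 := fun H => hy2 (by linarith [H])
  have hym : y - h ≠ 0 := sub_ne_zero.mpr hy1
  have hzp : z + h ≠ 0 := fun H => hz2 (by linarith [H])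
  have hzm : z - h ≠ 0 := sub_ne_zero.mpr hz1
  set R := (1/h + 1/x) * (1/h + 1/y) * (1/h + 1/z) with hR
  have hR2 : R * (h^3*x*y*z) = (x+h)*(y+h)*(z+h) := by
    rw [hR]; field_simp
  have hRne : R ≠ 0 := by
    intro H
    apply (mul_ne_zero (mul_ne_zero hxp hyp) hzp)
    rw [← hR2, H, zero_mul]
  have hRpos : 0 < R := lt_of_le_of_ne (heq ▸ Real.sqrt_nonneg _) (Ne.symm hRne)
  have hSpos : 0 < t * (1/h^2 - 1/x^2) * (1/h^2 - 1/y^2) * (1/h^2 - 1/z^2) :=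
    Real.sqrt_pos.mp (heq ▸ hRpos)
  have h2 : t * (1/h^2 - 1/x^2) * (1/h^2 - 1/y^2) * (1/h^2 - 1/z^2) = R^2 := by
    rw [← heq, Real.sq_sqrt hSpos.le]
  have key : t * ((x-h)*(y-h)*(z-h)) = (x+h)*(y+h)*(z+h) := by
    have hprod : (x+h)*(y+h)*(z+h) ≠ 0 := mul_ne_zero (mul_ne_zero hxp hyp) hzp
    apply mul_right_cancel₀ hprod
    field_simp at h2
    linear_combination h2 + (R*(h^3*x*y*z) + (x+h)*(y+h)*(z+h)) * hR2
  set m := (x-h)*(y-h)/(2*h*(z+h)) with hm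
  have hm0 : m ≠ 0 :=
    div_ne_zero (mul_ne_zero hxm hym)
      (mul_ne_zero (mul_ne_zero two_ne_zero hh) hzp)
  have eq1 : x + y = m * t * (z - h) - m * (z + h) := by
    rw [hm]; field_simp; linear_combination -key
  have eq2 : x * y = h * m * t * (z - h) + h * m * (z + h) - h^2 := by
    rw [hm]; field_simp; linear_combination -key
  refine ⟨m, hm0, eq1, eq2, ?_, ?_⟩
  · rw [← eq1, ← eq2]; nlinarith [sq_nonneg (x - y)]
  · rw [← eq1, ← eq2]
    have hE : (h^2 + h * (x + y) + x * y) * (x * y) * (1/h + 1/z) = R * (h*x*y)^2 := by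
      rw [hR]; field_simp; ring
    rw [hE]
    have : (h*x*y)^2 > 0 := by positivity
    exact mul_pos hRpos this
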